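/- Define f : [0,1] → 2^[0,1] by f(x) = {2x/3, 2x/3 + 1/3}. Then f is upper semicontinuous, surjective, and has the Weak Intermediate Value Property, but its graph G(f) is not connected. -/

import Mathlib

open Set

/-- Graph of a set-valued function on [0,1]. -/
def setValGraph (f : ℝ → Set ℝ) : Set (ℝ × ℝ) :=
  {p | p.1 ∈ Icc (0:ℝ) 1 ∧ p.2 ∈ f p.1}

/-- f has nonempty compact values contained in [0,1]. -/
def SV (f : ℝ → Set ℝ) : Prop :=
  ∀ x ∈ Icc (0:ℝ) 1, (f x).Nonempty ∧ IsCompact (f x) ∧ f x ⊆ Icc (0:ℝ) 1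

/-- Upper semicontinuity on [0,1]. -/
def USC (f : ℝ → Set ℝ) : Prop :=
  ∀ x ∈ Icc (0:ℝ) 1, ∀ U : Set ℝ, IsOpen U → f x ⊆ U →
    ∃ V : Set ℝ, IsOpen V ∧ x ∈ V ∧ ∀ v ∈ V ∩ Icc (0:ℝ) 1, f v ⊆ U

/-- Weak Intermediate Value Property. -/
def WIVP (f : ℝ → Set ℝ) : Prop :=
  ∀ x₁ ∈ Icc (0:ℝ) 1, ∀ x₂ ∈ Icc (0:ℝ) 1, x₁ ≠ x₂ → ∀ y₁ ∈ f x₁,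
    ∃ y₂ ∈ f x₂, ∀ y ∈ uIcc y₁ y₂, ∃ x ∈ uIcc x₁ x₂, y ∈ f x

/-- Intermediate Value Property. -/
def IVP (f : ℝ → Set ℝ) : Prop :=
  ∀ x₁ ∈ Icc (0:ℝ) 1, ∀ x₂ ∈ Icc (0:ℝ) 1, x₁ ≠ x₂ → ∀ y₁ ∈ f x₁, ∀ y₂ ∈ f x₂, y₁ ≠ y₂ →
    ∀ y ∈ Ioo (min y₁ y₂) (max y₁ y₂), ∃ x ∈ Ioo (min x₁ x₂) (max x₁ x₂), y ∈ f x

noncomputable def fTwoLines (x : ℝ) : Set ℝ := {2*x/3, 2*x/3 + 1/3}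

theorem stmt10 :
    USC fTwoLines ∧
    (∀ y ∈ Icc (0:ℝ) 1, ∃ x ∈ Icc (0:ℝ) 1, y ∈ fTwoLines x) ∧
    WIVP fTwoLines ∧
    ¬ IsConnected (setValGraph fTwoLines) := by
  refine ⟨?_, ?_, ?_, ?_⟩
  · -- USC
    intro x hx U hU hfU
    refine ⟨(fun v => 2*v/3) ⁻¹' U ∩ (fun v => 2*v/3 + 1/3) ⁻¹' U,
      (hU.preimage (by continuity)).inter (hU.preimage (by continuity)), ?_, ?_⟩
    · exact ⟨hfU (by simp [fTwoLines]), hfU (by simp [fTwoLines])⟩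
    · rintro v ⟨⟨hv1, hv2⟩, -⟩ y hy
      simp only [fTwoLines, mem_insert_iff, mem_singleton_iff] at hy
      rcases hy with rfl | rfl
      · exact hv1
      · exact hv2
  · -- surjective
    intro y hy
    rcases le_total y (2/3) with h | h
    · refine ⟨3*y/2, ⟨by linarith [hy.1], by linarith⟩, ?_⟩
      simp only [fTwoLines, mem_insert_iff, mem_singleton_iff]
      left; ring
    · refine ⟨3*(y - 1/3)/2, ⟨by linarith, by linarith [hy.2]⟩, ?_⟩
      simp only [fTwoLines, mem_insert_iff, mem_singleton_iff]
      right; ring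
  · -- WIVP
    intro x₁ hx₁ x₂ hx₂ hne y₁ hy₁
    simp only [fTwoLines, mem_insert_iff, mem_singleton_iff] at hy₁
    rcases hy₁ with rfl | rfl
    · refine ⟨2*x₂/3, by simp [fTwoLines], ?_⟩
      intro y hy
      refine ⟨3*y/2, ?_, ?_⟩
      · rw [mem_uIcc] at hy ⊢
        rcases hy with ⟨h1, h2⟩ | ⟨h1, h2⟩
        · left; constructor <;> linarith
        · right; constructor <;> linarith
      · simp only [fTwoLines, mem_insert_iff, mem_singleton_iff]
        left; ring
    · refine ⟨2*x₂/3 + 1/3, by simp [fTwoLines], ?_⟩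
      intro y hy
      refine ⟨3*(y - 1/3)/2, ?_, ?_⟩
      · rw [mem_uIcc] at hy ⊢
        rcases hy with ⟨h1, h2⟩ | ⟨h1, h2⟩
        · left; constructor <;> linarith
        · right; constructor <;> linarith
      · simp only [fTwoLines, mem_insert_iff, mem_singleton_iff]
        right; ring
  · -- not connected
    rintro ⟨hne, hconn⟩
    have hu : IsOpen {p : ℝ × ℝ | p.2 - 2*p.1/3 < 1/6} :=
      isOpen_lt (by continuity) continuous_const
    have hv : IsOpen {p : ℝ × ℝ | (1:ℝ)/6 < p.2 - 2*p.1/3} :=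
      isOpen_lt continuous_const (by continuity)
    have hcov : setValGraph fTwoLines ⊆
        {p : ℝ × ℝ | p.2 - 2*p.1/3 < 1/6} ∪ {p : ℝ × ℝ | (1:ℝ)/6 < p.2 - 2*p.1/3} := by
      rintro ⟨x, y⟩ ⟨hx, hy⟩
      simp only [fTwoLines, mem_insert_iff, mem_singleton_iff] at hy
      rcases hy with rfl | rfl
      · left; simp only [mem_setOf_eq]; linarith
      · right; simp only [mem_setOf_eq]; linarith
    have h1 : (setValGraph fTwoLines ∩ {p : ℝ × ℝ | p.2 - 2*p.1/3 < 1/6}).Nonempty := by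
      refine ⟨(0, 0), ⟨⟨le_refl 0, zero_le_one⟩, ?_⟩, by norm_num⟩
      simp [fTwoLines]
    have h2 : (setValGraph fTwoLines ∩ {p : ℝ × ℝ | (1:ℝ)/6 < p.2 - 2*p.1/3}).Nonempty := by
      refine ⟨(0, 1/3), ⟨⟨le_refl 0, zero_le_one⟩, ?_⟩, by norm_num⟩
      simp [fTwoLines]
    obtain ⟨p, -, hp1, hp2⟩ := hconn _ _ hu hv hcov h1 h2
    simp only [mem_setOf_eq] at hp1 hp2
    linarith
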